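/- Let P_n be the path graph on n ≥ 2 vertices v₁ ∼ v₂ ∼ ⋯ ∼ v_n equipped with the unit weight, with boundary B = {v₁, v_n} consisting of the two end vertices. Then σ₂ = 2/(n−1); in particular equality holds in Perrin's bound σ₂ ≥ |B|/((|B|−1)²·d_B), since here |B| = 2 and d_B = n−1. -/

import Mathlib

open Finset

variable {V : Type*}

/-- The Dirichlet energy `⟨du,du⟩ = ∑_{{x,y}∈E} (u y - u x)^2 w_{xy}` of a function `u`,
where the edge weight `w` is symmetric and vanishes on non-adjacent pairs. -/
noncomputable def energy [Fintype V] (w : V → V → ℝ) (u : V → ℝ) : ℝ :=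
  (1 / 2) * ∑ x, ∑ y, (u y - u x) ^ 2 * w x y

/-- The Dirichlet pairing `⟨du,dv⟩ = ∑_{{x,y}∈E} (u y - u x)(v y - v x) w_{xy}`. -/
noncomputable def dirPairing [Fintype V] (w : V → V → ℝ) (u v : V → ℝ) : ℝ :=
  (1 / 2) * ∑ x, ∑ y, (u y - u x) * (v y - v x) * w x y

/-- The weighted graph Laplacian `Δu(x) = (1/m_x) ∑_y (u y - u x) w_{xy}`. -/
noncomputable def glap [Fintype V] (m : V → ℝ) (w : V → V → ℝ) (u : V → ℝ) (x : V) : ℝ :=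
  (1 / m x) * ∑ y, (u y - u x) * w x y

/-- `d_B`, the maximal graph distance between two boundary vertices. -/
noncomputable def boundaryDiam (G : SimpleGraph V) (B : Finset V) : ℕ :=
  (B ×ˢ B).sup fun p => G.dist p.1 p.2

/-- `w₀`, the minimal edge weight. -/
noncomputable def minEdgeWeight (G : SimpleGraph V) (w : V → V → ℝ) : ℝ :=
  sInf {r : ℝ | ∃ x y, G.Adj x y ∧ w x y = r}

/-- `m₀`, the minimal vertex measure on the boundary. -/
noncomputable def minBoundaryMeasure (B : Finset V) (m : V → ℝ) : ℝ :=
  sInf {r : ℝ | ∃ x ∈ B, m x = r}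

/-- The second Steklov eigenvalue `σ₂`, via its variational characterization: the infimum of
the Rayleigh quotients `E(u)/⟨u,u⟩_B` over functions `u` on `V` whose boundary values are
nonzero and have weighted mean zero.  (Since the harmonic extension minimizes the Dirichlet
energy among all extensions of given boundary data, this agrees with the second eigenvalue of
the Steklov operator.) -/
noncomputable def sigma2 [Fintype V] (B : Finset V) (m : V → ℝ) (w : V → V → ℝ) : ℝ :=
  sInf {r : ℝ | ∃ u : V → ℝ, (∃ x ∈ B, u x ≠ 0) ∧ (∑ x ∈ B, u x * m x = 0) ∧
    r = energy w u / ∑ x ∈ B, (u x) ^ 2 * m x}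

namespace PathAux

/-- Extend `u : Fin n → ℝ` to ℕ by zero. -/
noncomputable def U {n : ℕ} (u : Fin n → ℝ) (k : ℕ) : ℝ :=
  if h : k < n then u ⟨k, h⟩ else 0

lemma double_sum (n : ℕ) (f : ℕ → ℕ → ℝ) :
    ∑ x ∈ range n, ∑ y ∈ range n, (if x + 1 = y ∨ y + 1 = x then f x y else 0)
      = ∑ i ∈ range (n - 1), (f i (i + 1) + f (i + 1) i) := by
  have hsplit : ∀ x y : ℕ, (if x + 1 = y ∨ y + 1 = x then f x y else 0)
      = (if x + 1 = y then f x y else 0) + (if y + 1 = x then f x y else 0) := by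
    intro x y
    by_cases h1 : x + 1 = y <;> by_cases h2 : y + 1 = x <;> simp [h1, h2] <;> omega
  simp only [hsplit, Finset.sum_add_distrib]
  have hA : ∑ x ∈ range n, ∑ y ∈ range n, (if x + 1 = y then f x y else 0)
      = ∑ i ∈ range (n - 1), f i (i + 1) := by
    have h1 : ∀ x ∈ range n, (∑ y ∈ range n, (if x + 1 = y then f x y else 0))
        = (if x + 1 ∈ range n then f x (x + 1) else 0) := fun x _ =>
      Finset.sum_ite_eq (range n) (x + 1) (fun y => f x y)
    rw [Finset.sum_congr rfl h1]
    rw [← Finset.sum_subset (Finset.range_subset_range.mpr (Nat.sub_le n 1))]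
    · exact Finset.sum_congr rfl fun x hx => by
        rw [if_pos]; simp only [mem_range] at hx ⊢; omega
    · intro x hx hx'
      simp only [mem_range] at hx hx'
      rw [if_neg]; simp only [mem_range]; omega
  have hB : ∑ x ∈ range n, ∑ y ∈ range n, (if y + 1 = x then f x y else 0)
      = ∑ i ∈ range (n - 1), f (i + 1) i := by
    rw [Finset.sum_comm]
    have h1 : ∀ y ∈ range n, (∑ x ∈ range n, (if y + 1 = x then f x y else 0))
        = (if y + 1 ∈ range n then f (y + 1) y else 0) := fun y _ =>
      Finset.sum_ite_eq (range n) (y + 1) (fun x => f x y)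
    rw [Finset.sum_congr rfl h1]
    rw [← Finset.sum_subset (Finset.range_subset_range.mpr (Nat.sub_le n 1))]
    · exact Finset.sum_congr rfl fun x hx => by
        rw [if_pos]; simp only [mem_range] at hx ⊢; omega
    · intro x hx hx'
      simp only [mem_range] at hx hx'
      rw [if_neg]; simp only [mem_range]; omega
  rw [hA, hB]

lemma energy_path (n : ℕ) (u : Fin n → ℝ) :
    energy (fun i j : Fin n => if (i : ℕ) + 1 = (j : ℕ) ∨ (j : ℕ) + 1 = (i : ℕ)
        then (1 : ℝ) else 0) u
      = ∑ i ∈ range (n - 1), (U u (i + 1) - U u i) ^ 2 := by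
  unfold energy
  have key : ∑ x : Fin n, ∑ y : Fin n,
      (u y - u x) ^ 2 * (if (x : ℕ) + 1 = (y : ℕ) ∨ (y : ℕ) + 1 = (x : ℕ) then (1:ℝ) else 0)
      = ∑ x ∈ range n, ∑ y ∈ range n,
        (if x + 1 = y ∨ y + 1 = x then (U u y - U u x) ^ 2 else 0) := by
    rw [← Fin.sum_univ_eq_sum_range (fun x => ∑ y ∈ range n,
        (if x + 1 = y ∨ y + 1 = x then (U u y - U u x) ^ 2 else 0))]
    refine Finset.sum_congr rfl fun x _ => ?_
    rw [← Fin.sum_univ_eq_sum_range (fun y =>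
        (if (x:ℕ) + 1 = y ∨ y + 1 = (x:ℕ) then (U u y - U u (x:ℕ)) ^ 2 else 0))]
    refine Finset.sum_congr rfl fun y _ => ?_
    have hx : U u (x : ℕ) = u x := by simp [U, x.isLt]
    have hy : U u (y : ℕ) = u y := by simp [U, y.isLt]
    rw [hx, hy]
    by_cases h : (x : ℕ) + 1 = (y : ℕ) ∨ (y : ℕ) + 1 = (x : ℕ) <;> simp [h]
  rw [key, double_sum]
  have : ∀ i ∈ range (n-1), (U u (i+1) - U u i)^2 + (U u i - U u (i+1))^2
      = 2 * (U u (i+1) - U u i)^2 := by intro i _; ring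
  rw [Finset.sum_congr rfl this, ← Finset.mul_sum]
  ring

end PathAux

namespace PathAux

lemma walk_length_lower {n : ℕ} {a b : Fin n} (p : (SimpleGraph.pathGraph n).Walk a b) :
    ((b : ℕ) : ℤ) - ((a : ℕ) : ℤ) ≤ p.length := by
  induction p with
  | nil => simp
  | @cons u v w h q ih =>
    rw [SimpleGraph.pathGraph_adj] at h
    rw [SimpleGraph.Walk.length_cons]
    push_cast at ih ⊢
    omega

lemma ex_walk (n : ℕ) : ∀ m k (h : k + m < n),
    ∃ p : (SimpleGraph.pathGraph n).Walk ⟨k, by omega⟩ ⟨k + m, h⟩, p.length = m := by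
  intro m
  induction m with
  | zero => intro k h; exact ⟨SimpleGraph.Walk.nil, rfl⟩
  | succ m ih =>
    intro k h
    have hadj : (SimpleGraph.pathGraph n).Adj ⟨k, by omega⟩ ⟨k + 1, by omega⟩ := by
      rw [SimpleGraph.pathGraph_adj]; left; rfl
    obtain ⟨p, hp⟩ := ih (k + 1) (by omega)
    refine ⟨SimpleGraph.Walk.cons hadj (p.copy rfl (Fin.ext (by simp; omega))), ?_⟩
    simp [hp]

lemma path_dist (n : ℕ) (hn : 2 ≤ n) :
    (SimpleGraph.pathGraph n).dist (⟨0, by have := hn; omega⟩ : Fin n) ⟨n - 1, by have := hn; omega⟩ = n - 1 := by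
  obtain ⟨p, hp⟩ := ex_walk n (n - 1) 0 (by omega)
  let p' : (SimpleGraph.pathGraph n).Walk ⟨0, by omega⟩ ⟨n - 1, by omega⟩ :=
    p.copy rfl (Fin.ext (by simp))
  apply le_antisymm
  · have h1 := SimpleGraph.dist_le p'
    rwa [SimpleGraph.Walk.length_copy, hp] at h1
  · have hr : (SimpleGraph.pathGraph n).Reachable ⟨0, by omega⟩ ⟨n-1, by omega⟩ := ⟨p'⟩
    obtain ⟨q, hq⟩ := hr.exists_walk_length_eq_dist
    have := walk_length_lower q
    rw [hq] at this
    simp only [Fin.val_mk] at this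
    omega

end PathAux

/-- **Sharpness example: the path graph.**
Let `P_n` be the path graph on `n ≥ 2` vertices `v₁ ∼ v₂ ∼ ⋯ ∼ v_n` with the unit weight and
boundary `B` consisting of the two end vertices.  Then `σ₂ = 2/(n-1)`; in particular, since
`|B| = 2` and `d_B = n - 1`, equality holds in Perrin's bound `σ₂ ≥ |B|/((|B|-1)² d_B)`. -/
theorem path_graph_sigma2 (n : ℕ) (hn : 2 ≤ n) :
    sigma2 ({⟨0, by omega⟩, ⟨n - 1, by omega⟩} : Finset (Fin n))
        (fun _ => (1 : ℝ))
        (fun i j => if (i : ℕ) + 1 = (j : ℕ) ∨ (j : ℕ) + 1 = (i : ℕ) then (1 : ℝ) else 0)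
      = 2 / ((n : ℝ) - 1) ∧
    boundaryDiam (SimpleGraph.pathGraph n)
        ({⟨0, by omega⟩, ⟨n - 1, by omega⟩} : Finset (Fin n)) = n - 1 := by
  have h2 : (2 : ℝ) ≤ (n : ℝ) := by exact_mod_cast hn
  have hn1 : (1 : ℝ) ≤ (n : ℝ) - 1 := by linarith
  have hne0 : ((n : ℝ) - 1) ≠ 0 := by linarith
  have hcast : ((n - 1 : ℕ) : ℝ) = (n : ℝ) - 1 := by
    rw [Nat.cast_sub (by omega), Nat.cast_one]
  have hab : (⟨0, by omega⟩ : Fin n) ≠ ⟨n - 1, by omega⟩ := by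
    simp only [ne_eq, Fin.mk.injEq]; omega
  constructor
  · -- the sigma2 computation
    set S : Set ℝ := {r : ℝ | ∃ u : Fin n → ℝ,
        (∃ x ∈ ({⟨0, by omega⟩, ⟨n - 1, by omega⟩} : Finset (Fin n)), u x ≠ 0) ∧
        (∑ x ∈ ({⟨0, by omega⟩, ⟨n - 1, by omega⟩} : Finset (Fin n)), u x * 1 = 0) ∧
        r = energy (fun i j : Fin n => if (i : ℕ) + 1 = (j : ℕ) ∨ (j : ℕ) + 1 = (i : ℕ)
            then (1 : ℝ) else 0) u /
          ∑ x ∈ ({⟨0, by omega⟩, ⟨n - 1, by omega⟩} : Finset (Fin n)), (u x) ^ 2 * 1}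
      with hS
    have hmem : 2 / ((n : ℝ) - 1) ∈ S := by
      refine ⟨fun i : Fin n => (i : ℝ) - ((n : ℝ) - 1) / 2, ⟨⟨0, by omega⟩, by simp, ?_⟩, ?_, ?_⟩
      · simp only [Fin.val_mk, Nat.cast_zero]
        intro h; rw [zero_sub, neg_eq_zero, div_eq_zero_iff] at h
        rcases h with h | h <;> norm_num at h; exact hne0 h
      · rw [Finset.sum_pair hab]
        simp only [Fin.val_mk, Nat.cast_zero, mul_one, hcast]
        ring
      · rw [PathAux.energy_path, Finset.sum_pair hab]
        have hterm : ∀ i ∈ range (n - 1),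
            (PathAux.U (fun i : Fin n => (i : ℝ) - ((n : ℝ) - 1) / 2) (i + 1) -
              PathAux.U (fun i : Fin n => (i : ℝ) - ((n : ℝ) - 1) / 2) i) ^ 2 = 1 := by
          intro i hi
          simp only [mem_range] at hi
          have h1 : i < n := by omega
          have h1' : i + 1 < n := by omega
          simp only [PathAux.U, dif_pos h1, dif_pos h1', Fin.val_mk]
          push_cast; ring
        rw [Finset.sum_congr rfl hterm, Finset.sum_const, card_range, nsmul_eq_mul, mul_one,
          hcast]
        simp only [Fin.val_mk, Nat.cast_zero, mul_one, hcast]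
        rw [div_eq_div_iff (by linarith) (by nlinarith [hn1])]
        ring
    have hlb : ∀ r ∈ S, 2 / ((n : ℝ) - 1) ≤ r := by
      rintro r ⟨u, ⟨x, hxB, hx0⟩, hsum, rfl⟩
      rw [Finset.sum_pair hab] at hsum
      simp only [mul_one] at hsum
      have hua : u ⟨0, by omega⟩ ≠ 0 := by
        rcases Finset.mem_insert.mp hxB with h | h
        · rwa [h] at hx0
        · rw [Finset.mem_singleton] at h
          rw [h] at hx0
          intro h0
          apply hx0
          linarith [hsum, h0]
      have hD : ∑ x ∈ ({⟨0, by omega⟩, ⟨n - 1, by omega⟩} : Finset (Fin n)), (u x) ^ 2 * 1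
          = 2 * (u ⟨0, by omega⟩) ^ 2 := by
        rw [Finset.sum_pair hab]
        have : u (⟨n - 1, by omega⟩ : Fin n) = - u ⟨0, by omega⟩ := by linarith
        rw [this]; ring
      rw [PathAux.energy_path, hD]
      set E := ∑ i ∈ range (n - 1), (PathAux.U u (i + 1) - PathAux.U u i) ^ 2 with hE
      have hE0 : 0 ≤ E := Finset.sum_nonneg fun i _ => sq_nonneg _
      have htel : ∑ i ∈ range (n - 1), (PathAux.U u (i + 1) - PathAux.U u i)
          = u ⟨n - 1, by omega⟩ - u ⟨0, by omega⟩ := by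
        rw [Finset.sum_range_sub (fun i => PathAux.U u i)]
        simp only [PathAux.U]
        rw [dif_pos (by omega : n - 1 < n), dif_pos (by omega : 0 < n)]
      have hCS := sq_sum_le_card_mul_sum_sq (s := range (n - 1))
        (f := fun i => PathAux.U u (i + 1) - PathAux.U u i)
      rw [htel, card_range, hcast, ← hE] at hCS
      rw [div_le_div_iff₀ (by linarith) (by positivity)]
      have hb : u (⟨n - 1, by omega⟩ : Fin n) = - u ⟨0, by omega⟩ := by linarith
      rw [hb] at hCS
      nlinarith [hCS]
    exact le_antisymm (csInf_le ⟨_, hlb⟩ hmem) (le_csInf ⟨_, hmem⟩ hlb)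
  · -- the boundary diameter
    unfold boundaryDiam
    apply le_antisymm
    · apply Finset.sup_le
      rintro ⟨x, y⟩ hp
      rw [Finset.mem_product] at hp
      obtain ⟨hx, hy⟩ := hp
      simp only [Finset.mem_insert, Finset.mem_singleton] at hx hy
      rcases hx with rfl | rfl <;> rcases hy with rfl | rfl
      · simp [SimpleGraph.dist_self]
      · exact le_of_eq (PathAux.path_dist n hn)
      · rw [SimpleGraph.dist_comm]
        exact le_of_eq (PathAux.path_dist n hn)
      · simp [SimpleGraph.dist_self]
    · have hmem : ((⟨0, by omega⟩ : Fin n), (⟨n - 1, by omega⟩ : Fin n)) ∈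
          (({⟨0, by omega⟩, ⟨n - 1, by omega⟩} : Finset (Fin n)) ×ˢ
           ({⟨0, by omega⟩, ⟨n - 1, by omega⟩} : Finset (Fin n))) := by
        rw [Finset.mem_product]
        constructor <;> simp
      have := Finset.le_sup (f := fun p : Fin n × Fin n =>
        (SimpleGraph.pathGraph n).dist p.1 p.2) hmem
      refine le_trans (le_of_eq (PathAux.path_dist n hn).symm) ?_
      exact this
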